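/- arXiv:2412.00040 — 3 statements merged into one kernel-verified Lean document; each statement's English description precedes it below -/
import Mathlib

section
/- For every nonnegative integer n, ∑_{k=0}^{n} C(2(n−k), n−k) · C(2k, k) = 2^{2n}. -/
open Finset

private def S (n : ℕ) : ℕ :=
  ∑ k ∈ Finset.range (n + 1), Nat.centralBinom k * Nat.centralBinom (n - k)

private lemma key (n : ℕ) :
    2 * ∑ k ∈ Finset.range (n + 1), k * (Nat.centralBinom k * Nat.centralBinom (n - k))
    = n * S n := by
  rw [two_mul, S, Finset.mul_sum]
  nth_rewrite 1 [← Finset.sum_range_reflect]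
  rw [← Finset.sum_add_distrib]
  apply Finset.sum_congr rfl
  intro k hk
  have hk' : k ≤ n := Nat.lt_succ_iff.mp (Finset.mem_range.mp hk)
  have h1 : n + 1 - 1 - k = n - k := by omega
  have h2 : n - (n - k) = k := by omega
  rw [h1, h2, mul_comm (Nat.centralBinom (n - k)) (Nat.centralBinom k), ← add_mul,
    Nat.sub_add_cancel hk']

private lemma S_succ (n : ℕ) : S (n + 1) = 4 * S n := by
  have hB : ∑ k ∈ Finset.range (n + 2),
      k * (Nat.centralBinom k * Nat.centralBinom (n + 1 - k))
      = 4 * (∑ k ∈ Finset.range (n + 1),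
          k * (Nat.centralBinom k * Nat.centralBinom (n - k))) + 2 * S n := by
    rw [Finset.sum_range_succ']
    simp only [Nat.zero_mul, add_zero]
    rw [S, Finset.mul_sum, Finset.mul_sum, ← Finset.sum_add_distrib]
    apply Finset.sum_congr rfl
    intro j hj
    have h1 : n + 1 - (j + 1) = n - j := by omega
    rw [h1, ← mul_assoc, Nat.succ_mul_centralBinom_succ]
    ring
  have hk2 := key (n + 1)
  rw [hB] at hk2
  have h2V := key n
  have hmain : (n + 1) * S (n + 1) = (n + 1) * (4 * S n) := by
    rw [← hk2]
    calc 2 * (4 * (∑ k ∈ Finset.range (n + 1),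
          k * (Nat.centralBinom k * Nat.centralBinom (n - k))) + 2 * S n)
        = 4 * (2 * ∑ k ∈ Finset.range (n + 1),
            k * (Nat.centralBinom k * Nat.centralBinom (n - k))) + 4 * S n := by ring
      _ = 4 * (n * S n) + 4 * S n := by rw [h2V]
      _ = (n + 1) * (4 * S n) := by ring
  exact Nat.eq_of_mul_eq_mul_left (Nat.succ_pos n) hmain

private lemma S_eq (n : ℕ) : S n = 2 ^ (2 * n) := by
  induction n with
  | zero => simp [S, Nat.centralBinom]
  | succ n ih =>
      rw [S_succ, ih]
      rw [show 2 * (n + 1) = 2 * n + 2 by ring, pow_add]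
      ring

theorem central_binomial_convolution (n : ℕ) :
    ∑ k ∈ Finset.range (n + 1), (2 * (n - k)).choose (n - k) * (2 * k).choose k
    = 2 ^ (2 * n) := by
  have := S_eq n
  rw [S] at this
  rw [← this]
  apply Finset.sum_congr rfl
  intro k hk
  rw [Nat.centralBinom, Nat.centralBinom, mul_comm]
end

section
/- Let n be a nonnegative integer and let v > −1 be a real number. Then ∑_{k=0}^{n} C(n,k) · B(2k+v, (2k+v)/2) · B(2n−2k+v, (2n−2k+v)/2) · B(n+v, (2k+v)/2)^{−1} = 2^{2n} · B(v, v/2). -/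
open Real Polynomial Finset

/-- Generalized binomial coefficient `B(a,b) = Γ(a+1)/(Γ(b+1)·Γ(a−b+1))`. -/
noncomputable def gbinom (a b : ℝ) : ℝ :=
  Real.Gamma (a + 1) / (Real.Gamma (b + 1) * Real.Gamma (a - b + 1))

lemma myGamma_add_nat (a : ℝ) (ha : 0 < a) (n : ℕ) :
    Real.Gamma (a + n) = Real.Gamma a * (ascPochhammer ℝ n).eval a := by
  induction n with
  | zero => simp
  | succ n ih =>
    have h1 : (0:ℝ) < a + n := by positivity
    have h2 : a + ((n+1 : ℕ) : ℝ) = (a + n) + 1 := by push_cast; ring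
    rw [h2, Real.Gamma_add_one h1.ne', ih, ascPochhammer_succ_right]
    simp [eval_mul]
    ring

lemma desc_smeval_eq_eval (n : ℕ) (x : ℝ) :
    (descPochhammer ℤ n).smeval x = (descPochhammer ℝ n).eval x := by
  rw [descPochhammer_smeval_eq_ascPochhammer, ascPochhammer_smeval_eq_eval,
    descPochhammer_eval_eq_ascPochhammer]

lemma asc_vandermonde (n : ℕ) (a b : ℝ) :
    ∑ k ∈ Finset.range (n+1), (n.choose k : ℝ) * (ascPochhammer ℝ k).eval a *
      (ascPochhammer ℝ (n-k)).eval b = (ascPochhammer ℝ n).eval (a+b) := by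
  have h1 : (ascPochhammer ℝ n).eval (a+b) = (-1:ℝ)^n * (descPochhammer ℝ n).eval (-(a+b)) := by
    have := ascPochhammer_eval_neg_eq_descPochhammer ℝ (-(a+b)) n
    simpa using this
  rw [h1, ← desc_smeval_eq_eval, show -(a+b) = -a + -b by ring,
    Ring.descPochhammer_smeval_add n (Commute.all _ _),
    Finset.Nat.sum_antidiagonal_eq_sum_range_succ_mk, Finset.mul_sum]
  refine Finset.sum_congr rfl fun k hk => ?_
  have hk' : k ≤ n := Nat.lt_succ_iff.mp (Finset.mem_range.mp hk)
  rw [desc_smeval_eq_eval, desc_smeval_eq_eval]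
  have e1 : (descPochhammer ℝ k).eval (-a) = (-1:ℝ)^k * (ascPochhammer ℝ k).eval a := by
    have := ascPochhammer_eval_neg_eq_descPochhammer ℝ (-a) k
    simp at this
    rw [this]; ring_nf
    rw [mul_comm k 2, pow_mul]; norm_num
  have e2 : (descPochhammer ℝ (n-k)).eval (-b) = (-1:ℝ)^(n-k) * (ascPochhammer ℝ (n-k)).eval b := by
    have := ascPochhammer_eval_neg_eq_descPochhammer ℝ (-b) (n-k)
    simp at this
    rw [this]; ring_nf
    rw [mul_comm (n - k) 2, pow_mul]; norm_num
  rw [e1, e2]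
  have : (-1:ℝ)^n * ((-1:ℝ)^k * (-1:ℝ)^(n-k)) = 1 := by
    rw [← pow_add, Nat.add_sub_cancel' hk', ← pow_add, ← two_mul, pow_mul]
    norm_num
  linear_combination -(↑(n.choose k) * eval a (ascPochhammer ℝ k) * eval b (ascPochhammer ℝ (n-k))) * this


lemma term_eq (n k : ℕ) (hk : k ≤ n) (v : ℝ) (hv : v > -1) :
    gbinom (2 * (k : ℝ) + v) ((2 * (k : ℝ) + v) / 2) *
      gbinom (2 * (n : ℝ) - 2 * (k : ℝ) + v) ((2 * (n : ℝ) - 2 * (k : ℝ) + v) / 2) *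
      (gbinom ((n : ℝ) + v) ((2 * (k : ℝ) + v) / 2))⁻¹
    = (ascPochhammer ℝ k).eval (v/2+1/2) * (ascPochhammer ℝ (n-k)).eval (v/2+1/2) *
      (Real.Gamma (v/2+1/2)^2 * ((2:ℝ) ^ (2*(n:ℝ)+2*v) / (π * Real.Gamma ((n:ℝ)+v+1)))) := by
  have hA : (0:ℝ) < v/2 + 1/2 := by linarith
  have hcast : ((n-k:ℕ):ℝ) = (n:ℝ) - (k:ℝ) := by rw [Nat.cast_sub hk]
  set GA := Real.Gamma (v/2+1/2) with hGA
  set q := Real.sqrt π with hq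
  set p := (2:ℝ) ^ v with hp
  have hq0 : (0:ℝ) < q := Real.sqrt_pos.mpr pi_pos
  have hp0 : (0:ℝ) < p := Real.rpow_pos_of_pos (by norm_num) v
  -- atoms
  set y := Real.Gamma (v/2+1+(k:ℝ)) with hy
  set y' := Real.Gamma (v/2+1+((n-k:ℕ):ℝ)) with hy'
  set z := Real.Gamma ((n:ℝ)+v+1) with hz
  set u := Real.Gamma (2*(k:ℝ)+v+1) with hu
  set u' := Real.Gamma (2*(n:ℝ)-2*(k:ℝ)+v+1) with hu'
  set Pk := (ascPochhammer ℝ k).eval (v/2+1/2) with hPk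
  set Pk' := (ascPochhammer ℝ (n-k)).eval (v/2+1/2) with hPk'
  have hy0 : (0:ℝ) < y := Real.Gamma_pos_of_pos
    (by have := (Nat.cast_nonneg k : (0:ℝ) ≤ k); linarith)
  have hy'0 : (0:ℝ) < y' := Real.Gamma_pos_of_pos
    (by have := (Nat.cast_nonneg (n-k) : (0:ℝ) ≤ (n-k:ℕ)); linarith)
  have hz0 : (0:ℝ) < z := Real.Gamma_pos_of_pos
    (by have := (Nat.cast_nonneg n : (0:ℝ) ≤ n); linarith)
  -- power lemmas
  have hpow1 : (2:ℝ) ^ (1 - (2*(k:ℝ)+v+1)) = (p * 4^k)⁻¹ := by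
    rw [show 1 - (2*(k:ℝ)+v+1) = -(v + ((2*k:ℕ):ℝ)) by push_cast; ring,
      Real.rpow_neg (by norm_num), Real.rpow_add (by norm_num), Real.rpow_natCast, pow_mul]
    norm_num
    exact hp.symm
  have hpow2 : (2:ℝ) ^ (1 - (2*(n:ℝ)-2*(k:ℝ)+v+1)) = (p * 4^(n-k))⁻¹ := by
    rw [show 1 - (2*(n:ℝ)-2*(k:ℝ)+v+1) = -(v + ((2*(n-k):ℕ):ℝ)) by push_cast [hcast]; ring,
      Real.rpow_neg (by norm_num), Real.rpow_add (by norm_num), Real.rpow_natCast, pow_mul]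
    norm_num
    exact hp.symm
  -- duplication for u
  have d1 := Real.Gamma_mul_Gamma_add_half (v/2+1/2+(k:ℝ))
  rw [show v/2+1/2+(k:ℝ)+1/2 = v/2+1+(k:ℝ) by ring,
    show 2*(v/2+1/2+(k:ℝ)) = 2*(k:ℝ)+v+1 by ring, hpow1,
    myGamma_add_nat _ hA k, ← hGA, ← hy, ← hu, ← hPk, ← hq] at d1
  have d2 := Real.Gamma_mul_Gamma_add_half (v/2+1/2+((n-k:ℕ):ℝ))
  rw [show v/2+1/2+((n-k:ℕ):ℝ)+1/2 = v/2+1+((n-k:ℕ):ℝ) by ring,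
    show 2*(v/2+1/2+((n-k:ℕ):ℝ)) = 2*((n-k:ℕ):ℝ)+v+1 by ring,
    myGamma_add_nat _ hA (n-k), ← hGA, ← hy', ← hPk',
    show 2*((n-k:ℕ):ℝ)+v+1 = 2*(n:ℝ)-2*(k:ℝ)+v+1 by rw [hcast]; ring,
    hpow2, ← hu', ← hq] at d2
  -- solve for u, u'
  have hu_eq : u = GA * Pk * y * (p * 4^k) / q := by
    field_simp at d1 ⊢
    linear_combination -d1
  have hu'_eq : u' = GA * Pk' * y' * (p * 4^(n-k)) / q := by
    field_simp at d2 ⊢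
    linear_combination -d2
  -- rhs power
  have hpowR : (2:ℝ) ^ (2*(n:ℝ)+2*v) = 4^n * p^2 := by
    rw [show 2*(n:ℝ)+2*v = ((2*n:ℕ):ℝ) + (v + v) by push_cast; ring,
      Real.rpow_add (by norm_num), Real.rpow_add (by norm_num), Real.rpow_natCast, pow_mul]
    norm_num [hp, sq]
  have h4 : (4:ℝ)^n = 4^k * 4^(n-k) := by rw [← pow_add, Nat.add_sub_cancel' hk]
  have hπ : π = q^2 := (Real.sq_sqrt pi_pos.le).symm
  -- unfold goal
  simp only [gbinom]
  rw [show (2*(k:ℝ)+v)/2 + 1 = v/2+1+(k:ℝ) by ring,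
    show 2*(k:ℝ)+v - (2*(k:ℝ)+v)/2 + 1 = v/2+1+(k:ℝ) by ring,
    show (2*(n:ℝ)-2*(k:ℝ)+v)/2 + 1 = v/2+1+((n-k:ℕ):ℝ) by rw [hcast]; ring,
    show 2*(n:ℝ)-2*(k:ℝ)+v - (2*(n:ℝ)-2*(k:ℝ)+v)/2 + 1 = v/2+1+((n-k:ℕ):ℝ) by rw [hcast]; ring,
    show (n:ℝ)+v - (2*(k:ℝ)+v)/2 + 1 = v/2+1+((n-k:ℕ):ℝ) by rw [hcast]; ring,
    ← hy, ← hy', ← hz, ← hu, ← hu', hu_eq, hu'_eq, hpowR, h4, hπ]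
  field_simp

theorem convolution_generalization (n : ℕ) (v : ℝ) (hv : v > -1) :
    ∑ k ∈ Finset.range (n + 1),
      (n.choose k : ℝ) * gbinom (2 * (k : ℝ) + v) ((2 * (k : ℝ) + v) / 2) *
        gbinom (2 * (n : ℝ) - 2 * (k : ℝ) + v) ((2 * (n : ℝ) - 2 * (k : ℝ) + v) / 2) *
        (gbinom ((n : ℝ) + v) ((2 * (k : ℝ) + v) / 2))⁻¹
    = (2 : ℝ) ^ (2 * n) * gbinom v (v / 2) := by
  have hA : (0:ℝ) < v/2 + 1/2 := by linarith
  set K := Real.Gamma (v/2+1/2)^2 * ((2:ℝ) ^ (2*(n:ℝ)+2*v) / (π * Real.Gamma ((n:ℝ)+v+1)))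
    with hK
  have step1 : ∑ k ∈ Finset.range (n + 1),
      (n.choose k : ℝ) * gbinom (2 * (k : ℝ) + v) ((2 * (k : ℝ) + v) / 2) *
        gbinom (2 * (n : ℝ) - 2 * (k : ℝ) + v) ((2 * (n : ℝ) - 2 * (k : ℝ) + v) / 2) *
        (gbinom ((n : ℝ) + v) ((2 * (k : ℝ) + v) / 2))⁻¹
      = (∑ k ∈ Finset.range (n+1), (n.choose k : ℝ) * (ascPochhammer ℝ k).eval (v/2+1/2) *
          (ascPochhammer ℝ (n-k)).eval (v/2+1/2)) * K := by
    rw [Finset.sum_mul]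
    refine Finset.sum_congr rfl fun k hk => ?_
    have hk' : k ≤ n := Nat.lt_succ_iff.mp (Finset.mem_range.mp hk)
    have := term_eq n k hk' v hv
    calc (n.choose k : ℝ) * gbinom (2 * (k : ℝ) + v) ((2 * (k : ℝ) + v) / 2) *
        gbinom (2 * (n : ℝ) - 2 * (k : ℝ) + v) ((2 * (n : ℝ) - 2 * (k : ℝ) + v) / 2) *
        (gbinom ((n : ℝ) + v) ((2 * (k : ℝ) + v) / 2))⁻¹
        = (n.choose k : ℝ) * (gbinom (2 * (k : ℝ) + v) ((2 * (k : ℝ) + v) / 2) *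
          gbinom (2 * (n : ℝ) - 2 * (k : ℝ) + v) ((2 * (n : ℝ) - 2 * (k : ℝ) + v) / 2) *
          (gbinom ((n : ℝ) + v) ((2 * (k : ℝ) + v) / 2))⁻¹) := by ring
      _ = (n.choose k : ℝ) * ((ascPochhammer ℝ k).eval (v/2+1/2) *
            (ascPochhammer ℝ (n-k)).eval (v/2+1/2) * K) := by rw [this]
      _ = (n.choose k : ℝ) * (ascPochhammer ℝ k).eval (v/2+1/2) *
            (ascPochhammer ℝ (n-k)).eval (v/2+1/2) * K := by ring
  rw [step1, asc_vandermonde n (v/2+1/2) (v/2+1/2),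
    show v/2+1/2+(v/2+1/2) = v+1 by ring]
  -- final constant identity
  set P := (ascPochhammer ℝ n).eval (v+1) with hP
  have hv10 : (0:ℝ) < v + 1 := by linarith
  have hzeq : Real.Gamma ((n:ℝ)+v+1) = Real.Gamma (v+1) * P := by
    rw [show (n:ℝ)+v+1 = (v+1) + (n:ℝ) by ring, myGamma_add_nat _ hv10 n]
  have hΓv1 : (0:ℝ) < Real.Gamma (v+1) := Real.Gamma_pos_of_pos hv10
  have hz0 : (0:ℝ) < Real.Gamma ((n:ℝ)+v+1) := Real.Gamma_pos_of_pos
    (by have := (Nat.cast_nonneg n : (0:ℝ) ≤ n); linarith)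
  have hP0 : P ≠ 0 := by
    intro h
    rw [hzeq, h, mul_zero] at hz0
    exact lt_irrefl 0 hz0
  set q := Real.sqrt π with hq
  set p := (2:ℝ) ^ v with hp
  have hq0 : (0:ℝ) < q := Real.sqrt_pos.mpr pi_pos
  have hp0 : (0:ℝ) < p := Real.rpow_pos_of_pos (by norm_num) v
  have hGB : (0:ℝ) < Real.Gamma (v/2+1) := Real.Gamma_pos_of_pos (by linarith)
  have dup := Real.Gamma_mul_Gamma_add_half (v/2+1/2)
  rw [show v/2+1/2+1/2 = v/2+1 by ring, show 2*(v/2+1/2) = v+1 by ring,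
    show 1-(v+1) = -v by ring, Real.rpow_neg (by norm_num), ← hp, ← hq] at dup
  -- dup : Γ(v/2+1/2) * Γ(v/2+1) = Γ(v+1) * p⁻¹ * q
  have hGv1 : Real.Gamma (v+1) = Real.Gamma (v/2+1/2) * Real.Gamma (v/2+1) * p / q := by
    field_simp at dup ⊢
    linear_combination -dup
  have hpowR : (2:ℝ) ^ (2*(n:ℝ)+2*v) = 4^n * p^2 := by
    rw [show 2*(n:ℝ)+2*v = ((2*n:ℕ):ℝ) + (v + v) by push_cast; ring,
      Real.rpow_add (by norm_num), Real.rpow_add (by norm_num), Real.rpow_natCast, pow_mul]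
    norm_num [hp, sq]
  have h2n : (2:ℝ) ^ (2*n) = 4^n := by rw [pow_mul]; norm_num
  have hπ : π = q^2 := (Real.sq_sqrt pi_pos.le).symm
  have hGA0 : (0:ℝ) < Real.Gamma (v/2+1/2) := Real.Gamma_pos_of_pos hA
  set GA := Real.Gamma (v/2+1/2) with hGAdef
  set GB := Real.Gamma (v/2+1) with hGBdef
  simp only [gbinom, hK]
  rw [show v - v/2 + 1 = v/2+1 by ring, ← hGBdef, hpowR, hπ, hzeq, hGv1, h2n]
  field_simp
end

section
/- Let n be a nonnegative integer, let u > −1 and v > −1 be real numbers, and let x be a real number. Then ∑_{k=0}^{n} (−1)^{n−k} · C(n,k) · B(k+u+v+1, u+1)^{−1} · (1−x)^{n−k} = ((u+1)/(v+1)) · ∑_{k=0}^{n} (−1)^k · C(n,k) · B(k+u+v+1, v+1)^{−1} · x^{n−k}. -/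
open Real

lemma key_sum (m : ℕ) : ∀ u v : ℝ, -1 < u → -1 < v →
    ∑ k ∈ Finset.range (m+1), (-1:ℝ)^k * (m.choose k : ℝ) *
      (Real.Gamma ((k:ℝ)+v+1) / Real.Gamma ((k:ℝ)+u+v+2))
    = Real.Gamma (v+1) * Real.Gamma ((m:ℝ)+u+1) /
      (Real.Gamma (u+1) * Real.Gamma ((m:ℝ)+u+v+2)) := by
  induction m with
  | zero =>
    intro u v hu hv
    have h1 : Real.Gamma (u+1) ≠ 0 := (Real.Gamma_pos_of_pos (by linarith)).ne'
    simp only [zero_add, Finset.sum_range_one, Nat.choose_self, Nat.cast_one, Nat.cast_zero,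
      pow_zero, one_mul, Nat.cast_ofNat]
    rw [mul_comm (Real.Gamma (v+1)) (Real.Gamma (u+1)), mul_div_mul_left _ _ h1]
  | succ m ih =>
    intro u v hu hv
    set g : ℕ → ℝ := fun k => Real.Gamma ((k:ℝ)+v+1) / Real.Gamma ((k:ℝ)+u+v+2) with hg
    set S : ℝ := ∑ k ∈ Finset.range (m+1), (-1:ℝ)^k * (m.choose k : ℝ) * g k with hSdef
    have hS : S = Real.Gamma (v+1) * Real.Gamma ((m:ℝ)+u+1) /
        (Real.Gamma (u+1) * Real.Gamma ((m:ℝ)+u+v+2)) := ih u v hu hv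
    have hAval : ∑ k ∈ Finset.range (m+1), (-1:ℝ)^k * (m.choose k : ℝ) * g (k+1)
        = Real.Gamma (v+2) * Real.Gamma ((m:ℝ)+u+1) /
          (Real.Gamma (u+1) * Real.Gamma ((m:ℝ)+u+v+3)) := by
      have := ih u (v+1) hu (by linarith)
      rw [Finset.sum_congr rfl (fun k _ => by
        have : g (k+1) = Real.Gamma ((k:ℝ)+(v+1)+1) / Real.Gamma ((k:ℝ)+u+(v+1)+2) := by
          simp only [hg]; push_cast; ring_nf
        rw [this]), this]
      ring_nf
    have hf0 : (-1:ℝ)^(0:ℕ) * (m.choose 0 : ℝ) * g 0 = g 0 := by simp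
    have hpeel := Finset.sum_range_succ' (fun k => (-1:ℝ)^k * (m.choose k : ℝ) * g k) m
    have hBval : ∑ k ∈ Finset.range (m+1), (-1:ℝ)^k * (m.choose (k+1) : ℝ) * g (k+1)
        = g 0 - S := by
      rw [Finset.sum_range_succ, Nat.choose_succ_self, Nat.cast_zero, mul_zero, zero_mul, add_zero]
      have h1 : ∑ k ∈ Finset.range m, (-1:ℝ)^(k+1) * (m.choose (k+1) : ℝ) * g (k+1)
          = S - g 0 := by
        rw [hSdef, hpeel, hf0]; ring
      have h2 : ∀ k, (-1:ℝ)^k * (m.choose (k+1) : ℝ) * g (k+1)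
          = -((-1:ℝ)^(k+1) * (m.choose (k+1) : ℝ) * g (k+1)) := by intro k; ring
      rw [Finset.sum_congr rfl (fun k _ => h2 k), Finset.sum_neg_distrib, h1]; ring
    have hmain : ∑ k ∈ Finset.range (m+1+1), (-1:ℝ)^k * ((m+1).choose k : ℝ) * g k
        = S - (Real.Gamma (v+2) * Real.Gamma ((m:ℝ)+u+1) /
          (Real.Gamma (u+1) * Real.Gamma ((m:ℝ)+u+v+3))) := by
      rw [Finset.sum_range_succ' (fun k => (-1:ℝ)^k * ((m+1).choose k : ℝ) * g k) (m+1)]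
      have h3 : ∀ k, (-1:ℝ)^(k+1) * ((m+1).choose (k+1) : ℝ) * g (k+1)
          = -((-1:ℝ)^k * (m.choose k : ℝ) * g (k+1))
            - ((-1:ℝ)^k * (m.choose (k+1) : ℝ) * g (k+1)) := by
        intro k
        rw [Nat.choose_succ_succ]
        push_cast
        ring
      rw [Finset.sum_congr rfl (fun k _ => h3 k), Finset.sum_sub_distrib,
        Finset.sum_neg_distrib, hAval, hBval]
      simp only [Nat.choose_zero_right, Nat.cast_one, pow_zero, one_mul]
      ring
    rw [hmain, hS]
    have hG1 : Real.Gamma ((m:ℝ)+u+v+3) = ((m:ℝ)+u+v+2) * Real.Gamma ((m:ℝ)+u+v+2) := by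
      rw [show (m:ℝ)+u+v+3 = ((m:ℝ)+u+v+2)+1 by ring]
      have hpos : (0:ℝ) < (m:ℝ)+u+v+2 := by
        have := Nat.cast_nonneg (α := ℝ) m; linarith
      exact Real.Gamma_add_one hpos.ne'
    have hG2 : Real.Gamma (v+2) = (v+1) * Real.Gamma (v+1) := by
      rw [show v+2 = (v+1)+1 by ring]
      exact Real.Gamma_add_one (by linarith)
    have hG3 : Real.Gamma ((m:ℝ)+1+u+1) = ((m:ℝ)+u+1) * Real.Gamma ((m:ℝ)+u+1) := by
      rw [show (m:ℝ)+1+u+1 = ((m:ℝ)+u+1)+1 by ring]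
      have hpos : (0:ℝ) < (m:ℝ)+u+1 := by
        have := Nat.cast_nonneg (α := ℝ) m; linarith
      exact Real.Gamma_add_one hpos.ne'
    have hne1 : Real.Gamma (u+1) ≠ 0 := (Real.Gamma_pos_of_pos (by linarith)).ne'
    have hne2 : Real.Gamma ((m:ℝ)+u+v+2) ≠ 0 := by
      refine (Real.Gamma_pos_of_pos ?_).ne'
      have := Nat.cast_nonneg (α := ℝ) m; linarith
    have hne3 : Real.Gamma ((m:ℝ)+u+v+3) ≠ 0 := by
      refine (Real.Gamma_pos_of_pos ?_).ne'
      have := Nat.cast_nonneg (α := ℝ) m; linarith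
    have hne4 : ((m:ℝ)+u+v+2) ≠ 0 := by
      have := Nat.cast_nonneg (α := ℝ) m; intro h; linarith
    push_cast
    rw [show (m:ℝ)+1+u+v+2 = (m:ℝ)+u+v+3 by ring, hG1, hG2, hG3]
    field_simp
    ring

lemma triangle_swap {M : Type*} [AddCommMonoid M] (N : ℕ) (f : ℕ → ℕ → M) :
    ∑ i ∈ Finset.range N, ∑ j ∈ Finset.range (N - i), f i j
    = ∑ j ∈ Finset.range N, ∑ i ∈ Finset.range (N - j), f i j := by
  rw [Finset.sum_sigma', Finset.sum_sigma']
  refine Finset.sum_nbij' (fun x => ⟨x.2, x.1⟩) (fun x => ⟨x.2, x.1⟩) ?_ ?_ (fun _ _ => rfl)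
    (fun _ _ => rfl) (fun _ _ => rfl) <;>
  · simp only [Finset.mem_sigma, Finset.mem_range, Sigma.forall]
    intro a b h
    omega

lemma choose_tri (n k j : ℕ) (h : k + j ≤ n) :
    n.choose k * (n - k).choose j = n.choose j * (n - j).choose k := by
  have h1 := Nat.choose_mul (n := n) (show k ≤ n - j by omega)
  rw [Nat.choose_symm (show j ≤ n by omega)] at h1
  rw [show n - j - k = (n - k) - j by omega,
      Nat.choose_symm (show j ≤ n - k by omega)] at h1
  exact h1.symm

lemma neg_one_pow_sub (a b : ℕ) (h : b ≤ a) : (-1:ℝ)^(a-b) = (-1)^a * (-1)^b := by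
  have hsq : (-1:ℝ)^b * (-1)^b = 1 := by rw [← mul_pow]; norm_num
  have hp : (-1:ℝ)^(a-b) * (-1)^b = (-1)^a := by
    rw [← pow_add, show a - b + b = a by omega]
  calc (-1:ℝ)^(a-b) = (-1)^(a-b) * ((-1)^b * (-1)^b) := by rw [hsq, mul_one]
  _ = ((-1)^(a-b) * (-1)^b) * (-1)^b := by ring
  _ = (-1)^a * (-1)^b := by rw [hp]

theorem polynomial_identity_binom_recip (n : ℕ) (u v : ℝ) (hu : u > -1) (hv : v > -1)
    (x : ℝ) :
    ∑ k ∈ Finset.range (n + 1),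
      (-1 : ℝ) ^ (n - k) * (n.choose k : ℝ) *
        (gbinom ((k : ℝ) + u + v + 1) (u + 1))⁻¹ * (1 - x) ^ (n - k)
    = (u + 1) / (v + 1) *
        ∑ k ∈ Finset.range (n + 1),
          (-1 : ℝ) ^ k * (n.choose k : ℝ) *
            (gbinom ((k : ℝ) + u + v + 1) (v + 1))⁻¹ * x ^ (n - k) := by
  have hGu1 : Real.Gamma (u+1) ≠ 0 := (Real.Gamma_pos_of_pos (by linarith)).ne'
  have hv1 : (v+1) ≠ 0 := by intro h; linarith
  have hGu2 : Real.Gamma (u+2) = (u+1) * Real.Gamma (u+1) := by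
    rw [show u+2 = (u+1)+1 by ring]; exact Real.Gamma_add_one (by intro h; linarith)
  have hGv2 : Real.Gamma (v+2) = (v+1) * Real.Gamma (v+1) := by
    rw [show v+2 = (v+1)+1 by ring]; exact Real.Gamma_add_one hv1
  have hLHS : ∑ k ∈ Finset.range (n + 1),
      (-1 : ℝ) ^ (n - k) * (n.choose k : ℝ) *
        (gbinom ((k : ℝ) + u + v + 1) (u + 1))⁻¹ * (1 - x) ^ (n - k)
      = ∑ j ∈ Finset.range (n+1), ∑ k ∈ Finset.range (n+1-j),
          (n.choose k : ℝ) *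
            (Real.Gamma (u+2) * Real.Gamma ((k:ℝ)+v+1) / Real.Gamma ((k:ℝ)+u+v+2)) *
            (x^j * (-1:ℝ)^(n-k-j) * ((n-k).choose j : ℝ)) := by
    rw [← triangle_swap (n+1)]
    refine Finset.sum_congr rfl fun k hk => ?_
    have hk' : k ≤ n := by have := Finset.mem_range.mp hk; omega
    simp only [gbinom]
    rw [show ((k:ℝ)+u+v+1+1:ℝ) = (k:ℝ)+u+v+2 by ring, show (u+1+1:ℝ) = u+2 by ring,
        show ((k:ℝ)+u+v+1-(u+1)+1:ℝ) = (k:ℝ)+v+1 by ring, inv_div]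
    have hpow : (-1:ℝ)^(n-k) * (1-x)^(n-k) = (x-1)^(n-k) := by
      rw [← mul_pow]; congr 1; ring
    calc (-1 : ℝ) ^ (n - k) * (n.choose k : ℝ) *
          (Real.Gamma (u+2) * Real.Gamma ((k:ℝ)+v+1) / Real.Gamma ((k:ℝ)+u+v+2)) *
          (1 - x) ^ (n - k)
        = (n.choose k : ℝ) *
          (Real.Gamma (u+2) * Real.Gamma ((k:ℝ)+v+1) / Real.Gamma ((k:ℝ)+u+v+2)) *
          ((-1:ℝ)^(n-k) * (1-x)^(n-k)) := by ring
      _ = (n.choose k : ℝ) *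
          (Real.Gamma (u+2) * Real.Gamma ((k:ℝ)+v+1) / Real.Gamma ((k:ℝ)+u+v+2)) *
          (x-1)^(n-k) := by rw [hpow]
      _ = _ := by
          rw [show x - 1 = x + (-1) by ring, add_pow,
            show n - k + 1 = n + 1 - k by omega, Finset.mul_sum]
  rw [hLHS, Finset.mul_sum]
  conv_rhs => rw [← Finset.sum_range_reflect]
  refine Finset.sum_congr rfl fun j hj => ?_
  have hj' : j ≤ n := by have := Finset.mem_range.mp hj; omega
  -- inner sum via key_sum
  have hinner : ∀ k ∈ Finset.range (n+1-j),
      (n.choose k : ℝ) *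
        (Real.Gamma (u+2) * Real.Gamma ((k:ℝ)+v+1) / Real.Gamma ((k:ℝ)+u+v+2)) *
        (x^j * (-1:ℝ)^(n-k-j) * ((n-k).choose j : ℝ))
      = (Real.Gamma (u+2) * x^j * (-1:ℝ)^(n-j) * ((n.choose j : ℝ))) *
        ((-1:ℝ)^k * (((n-j).choose k : ℝ)) *
          (Real.Gamma ((k:ℝ)+v+1) / Real.Gamma ((k:ℝ)+u+v+2))) := by
    intro k hk
    have hkj : k + j ≤ n := by have := Finset.mem_range.mp hk; omega
    have hc : (n.choose k : ℝ) * ((n-k).choose j : ℝ)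
        = (n.choose j : ℝ) * ((n-j).choose k : ℝ) := by
      exact_mod_cast congrArg (Nat.cast (R := ℝ)) (choose_tri n k j hkj)
    have hsgn : (-1:ℝ)^(n-k-j) = (-1)^(n-j) * (-1)^k := by
      rw [show n - k - j = (n-j) - k by omega, neg_one_pow_sub _ _ (by omega)]
    rw [hsgn]
    linear_combination (Real.Gamma (u+2) * Real.Gamma ((k:ℝ)+v+1) / Real.Gamma ((k:ℝ)+u+v+2)
      * x^j * ((-1:ℝ)^(n-j) * (-1:ℝ)^k)) * hc
  rw [Finset.sum_congr rfl hinner, ← Finset.mul_sum,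
    show n + 1 - j = (n - j) + 1 by omega, key_sum (n-j) u v hu hv]
  -- now the reflected RHS term
  simp only [Nat.add_sub_cancel]
  rw [show n - (n - j) = j by omega, Nat.choose_symm hj']
  simp only [gbinom]
  rw [show ((↑(n-j):ℝ)+u+v+1+1:ℝ) = (↑(n-j):ℝ)+u+v+2 by ring, show (v+1+1:ℝ) = v+2 by ring,
      show ((↑(n-j):ℝ)+u+v+1-(v+1)+1:ℝ) = (↑(n-j):ℝ)+u+1 by ring, inv_div]
  rw [Nat.cast_sub hj']
  have hM : Real.Gamma ((n:ℝ) - (j:ℝ) + u + v + 2) ≠ 0 := by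
    refine (Real.Gamma_pos_of_pos ?_).ne'
    have : (j:ℝ) ≤ (n:ℝ) := Nat.cast_le.mpr hj'
    linarith
  rw [hGu2, hGv2]
  field_simp [hGu1, hv1, hM]
end
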